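/- Suppose for each λ ∈ ]a,b[ the function J + λΦ has sequentially compact sub-level sets and a unique global minimum ŷ_λ. Then the map λ ↦ ŷ_λ is sequentially continuous on ]a,b[. -/

import Mathlib

open Filter Topology

private lemma seq_limit_mem {X : Type*} [TopologicalSpace X] [T2Space X] {s : Set X}
    (hs : IsSeqCompact s) {v : ℕ → X} {x : X} (hv : ∀ n, v n ∈ s)
    (hx : Tendsto v atTop (𝓝 x)) : x ∈ s := by
  obtain ⟨p, hp, ψ, hψ, hconv⟩ := hs hv
  exact tendsto_nhds_unique hconv (hx.comp hψ.tendsto_atTop) ▸ hp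

/-- If for each `λ ∈ ]a,b[` the function `J + λΦ` has sequentially compact sub-level sets
and a unique global minimum `y λ`, then `λ ↦ y λ` is sequentially continuous on `]a,b[`. -/
theorem stmt_5 {X : Type*} [TopologicalSpace X] [T2Space X] [Nonempty X]
    (J Φ : X → ℝ) (a b : EReal) (hab : a < b) (y : ℝ → X)
    (hcpt : ∀ l : ℝ, a < (l : EReal) → (l : EReal) < b →
      ∀ r : ℝ, IsSeqCompact {x : X | J x + l * Φ x ≤ r})
    (hmin : ∀ l : ℝ, a < (l : EReal) → (l : EReal) < b →
      ∀ x : X, J (y l) + l * Φ (y l) ≤ J x + l * Φ x)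
    (huniq : ∀ l : ℝ, a < (l : EReal) → (l : EReal) < b →
      ∀ x : X, (∀ z : X, J x + l * Φ x ≤ J z + l * Φ z) → x = y l) :
    ∀ l : ℝ, a < (l : EReal) → (l : EReal) < b →
      ∀ u : ℕ → ℝ, (∀ n, a < (u n : EReal) ∧ (u n : EReal) < b) →
        Tendsto u atTop (𝓝 l) → Tendsto (fun n => y (u n)) atTop (𝓝 (y l)) := by
  intro l hla hlb u hu hul
  obtain ⟨m1, ham1, hm1l⟩ := EReal.exists_between_coe_real hla
  obtain ⟨m2, hlm2, hm2b⟩ := EReal.exists_between_coe_real hlb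
  have hm1l' : m1 < l := by exact_mod_cast hm1l
  have hlm2' : l < m2 := by exact_mod_cast hlm2
  have hm1b : (m1 : EReal) < b := hm1l.trans hlb
  have ham2 : a < (m2 : EReal) := hla.trans hlm2
  -- monotonicity of Φ ∘ y
  have mono : ∀ μ lam : ℝ, a < (μ:EReal) → (μ:EReal) < b → a < (lam:EReal) →
      (lam:EReal) < b → μ ≤ lam → Φ (y lam) ≤ Φ (y μ) := by
    intro μ lam haμ hμb halam hlamb hle
    rcases eq_or_lt_of_le hle with rfl | hlt
    · exact le_refl _
    · have h1 := hmin μ haμ hμb (y lam)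
      have h2 := hmin lam halam hlamb (y μ)
      nlinarith
  set B : ℝ := |Φ (y m1)| + |Φ (y m2)| with hB
  have hB0 : 0 ≤ B := by positivity
  -- bound on Φ ∘ y on [m1, m2]
  have habs : ∀ lam : ℝ, a < (lam:EReal) → (lam:EReal) < b → m1 ≤ lam → lam ≤ m2 →
      -B ≤ Φ (y lam) ∧ Φ (y lam) ≤ B := by
    intro lam halam hlamb h1 h2
    have hu1 := mono m1 lam ham1 hm1b halam hlamb h1
    have hu2 := mono lam m2 halam hlamb ham2 hm2b h2
    constructor
    · have := neg_abs_le (Φ (y m2))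
      have := abs_nonneg (Φ (y m1))
      nlinarith
    · have := le_abs_self (Φ (y m1))
      have := abs_nonneg (Φ (y m2))
      nlinarith
  have hlmem : m1 ≤ l ∧ l ≤ m2 := ⟨hm1l'.le, hlm2'.le⟩
  have hlB := habs l hla hlb hlmem.1 hlmem.2
  set r : ℝ := J (y l) + l * Φ (y l) + 2 * (m2 - m1) * B with hr
  -- y lam lies in the sublevel set {J + lΦ ≤ r} for lam ∈ [m1,m2]
  have hkey : ∀ lam : ℝ, a < (lam:EReal) → (lam:EReal) < b → m1 ≤ lam → lam ≤ m2 →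
      J (y lam) + l * Φ (y lam) ≤ r := by
    intro lam halam hlamb h1 h2
    have hm := hmin lam halam hlamb (y l)
    have hb1 := habs lam halam hlamb h1 h2
    nlinarith [hlB.1, hlB.2, hb1.1, hb1.2, hlmem.1, hlmem.2]
  -- choose N such that u n ∈ [m1, m2] for n ≥ N
  have hev : ∀ᶠ n in atTop, u n ∈ Set.Icc m1 m2 := hul (Icc_mem_nhds hm1l' hlm2')
  obtain ⟨N, hN⟩ := eventually_atTop.1 hev
  by_contra hcon
  obtain ⟨s, hs_nhds, hfreq⟩ : ∃ s ∈ 𝓝 (y l), ∃ᶠ n in atTop, y (u n) ∉ s := by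
    by_contra h; push_neg at h
    apply hcon
    rw [tendsto_def]
    intro s hs
    have := h s hs
    simpa using this
  obtain ⟨φ, hφ, hφs⟩ := extraction_of_frequently_atTop hfreq
  set w : ℕ → ℝ := fun k => u (φ (k + N)) with hw
  have hwmem : ∀ k, m1 ≤ w k ∧ w k ≤ m2 := by
    intro k
    have : N ≤ φ (k + N) := le_trans (Nat.le_add_left N k) (hφ.le_apply)
    exact ⟨(hN _ this).1, (hN _ this).2⟩
  have hwa : ∀ k, a < ((w k : ℝ) : EReal) := fun k => (hu _).1
  have hwb : ∀ k, ((w k : ℝ) : EReal) < b := fun k => (hu _).2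
  have hwt : Tendsto w atTop (𝓝 l) :=
    hul.comp (hφ.tendsto_atTop.comp (tendsto_add_atTop_nat N))
  have hwS : ∀ k, y (w k) ∈ {x : X | J x + l * Φ x ≤ r} := fun k =>
    hkey (w k) (hwa k) (hwb k) (hwmem k).1 (hwmem k).2
  obtain ⟨x0, hx0S, ψ, hψ, hconv⟩ := hcpt l hla hlb r hwS
  have hwψt : Tendsto (fun k => w (ψ k)) atTop (𝓝 l) := hwt.comp hψ.tendsto_atTop
  -- x0 is a global minimum of J + lΦ
  have hxmin : ∀ z : X, J x0 + l * Φ x0 ≤ J z + l * Φ z := by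
    intro z
    refine le_of_forall_pos_le_add ?_
    intro ε hε
    set C : ℝ := |Φ z| + B + 1 with hC
    have hC0 : 0 < C := by positivity
    have htd : Tendsto (fun k => |w (ψ k) - l| * C) atTop (𝓝 0) := by
      have h1 : Tendsto (fun k => w (ψ k) - l) atTop (𝓝 0) := by
        simpa using hwψt.sub (tendsto_const_nhds (x := l))
      have h2 : Tendsto (fun k => |w (ψ k) - l|) atTop (𝓝 0) := by
        simpa using h1.abs
      simpa using h2.mul_const C
    have hevε : ∀ᶠ k in atTop, |w (ψ k) - l| * C < ε :=
      htd.eventually (gt_mem_nhds hε)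
    obtain ⟨K, hK⟩ := eventually_atTop.1 hevε
    -- the tail lies in the sublevel set at level J z + l Φ z + ε
    have htail : ∀ k, y (w (ψ (k + K))) ∈ {x : X | J x + l * Φ x ≤ J z + l * Φ z + ε} := by
      intro k
      have hKk : K ≤ ψ (k + K) := by
        calc K ≤ k + K := Nat.le_add_left K k
        _ ≤ ψ (k + K) := hψ.le_apply
      have hd := hK (k + K) (Nat.le_add_left K k)
      set lam := w (ψ (k + K)) with hlam
      have hm := hmin lam (hwa _) (hwb _) z
      have hb1 := habs lam (hwa _) (hwb _) (hwmem _).1 (hwmem _).2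
      have habs1 := le_abs_self (lam - l)
      have habs2 := neg_abs_le (lam - l)
      have habs3 := le_abs_self (Φ z)
      have habs4 := neg_abs_le (Φ z)
      have habs5 := abs_nonneg (lam - l)
      have p1 : 0 ≤ (|lam - l| - (lam - l)) * (|Φ z| - Φ z) :=
        mul_nonneg (by linarith) (by linarith)
      have p2 : 0 ≤ (|lam - l| + (lam - l)) * (|Φ z| + Φ z) :=
        mul_nonneg (by linarith) (by linarith)
      have p3 : 0 ≤ (|lam - l| - (l - lam)) * (B - Φ (y lam)) :=
        mul_nonneg (by linarith) (by linarith [hb1.2])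
      have p4 : 0 ≤ (|lam - l| + (l - lam)) * (B + Φ (y lam)) :=
        mul_nonneg (by linarith) (by linarith [hb1.1])
      show J (y lam) + l * Φ (y lam) ≤ J z + l * Φ z + ε
      nlinarith [hb1.1, hb1.2, mul_nonneg habs5 (abs_nonneg (Φ z)), p1, p2, p3, p4]
    have htconv : Tendsto (fun k => y (w (ψ (k + K)))) atTop (𝓝 x0) :=
      hconv.comp (tendsto_add_atTop_nat K)
    have := seq_limit_mem (hcpt l hla hlb (J z + l * Φ z + ε)) htail htconv
    exact this
  have hx0 : x0 = y l := huniq l hla hlb x0 hxmin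
  rw [hx0] at hconv
  have : ∀ᶠ k in atTop, y (w (ψ k)) ∈ s := hconv hs_nhds
  obtain ⟨K, hK⟩ := eventually_atTop.1 this
  exact hφs (ψ K + N) (hK K le_rfl)
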